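/- Let M=(S,A,P) be an RMDP and c : S → {0,…,d} a priority function. If m > 0 and there exists a pure memoryless agent policy σ such that Val^{s,σ}_M(Parity(c)) ≥ m for every state s ∈ S, then Val^{s,σ}_M(Parity(c)) = 1 for every state s ∈ S. -/

import Mathlib

open scoped BigOperators Classical ENNReal

open MeasureTheory

/-- A robust MDP over finite state set `S` and finite action set `A`.
Distributions are represented as real-valued probability vectors `S → ℝ`. -/
structure RMDP (S A : Type) [Fintype S] [Fintype A] where
  /-- available actions at each state -/
  Act : S → Finset A
  Act_nonempty : ∀ s, (Act s).Nonempty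
  /-- the uncertainty sets -/
  P : S → A → Set (S → ℝ)
  P_prob : ∀ s, ∀ a ∈ Act s, ∀ p ∈ P s a, (∀ t, 0 ≤ p t) ∧ ∑ t, p t = 1
  P_nonempty : ∀ s, ∀ a ∈ Act s, (P s a).Nonempty
  P_compact : ∀ s, ∀ a ∈ Act s, IsCompact (P s a)

variable {S A : Type} [Fintype S] [Nonempty S] [Fintype A]
  [MeasurableSpace S] [DiscreteMeasurableSpace S]
  [MeasurableSpace A] [DiscreteMeasurableSpace A]

/-- An agent policy: given a history and the current state, a probability
distribution over the available actions. -/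
structure AgentPolicy (M : RMDP S A) where
  toFun : List (S × A) → S → A → ℝ
  nonneg : ∀ h s a, 0 ≤ toFun h s a
  sum_one : ∀ h s, ∑ a, toFun h s a = 1
  mem_act : ∀ h s a, toFun h s a ≠ 0 → a ∈ M.Act s

/-- An environment policy: given a history, the current state and the chosen
action, a distribution from the uncertainty set. -/
structure EnvPolicy (M : RMDP S A) where
  toFun : List (S × A) → S → A → S → ℝ
  mem : ∀ h s, ∀ a ∈ M.Act s, toFun h s a ∈ M.P s a

/-- A pure memoryless agent policy deterministically picks an action
depending only on the current state. -/
def AgentPolicy.PureMemoryless {M : RMDP S A} (σ : AgentPolicy M) : Prop :=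
  ∃ f : S → A, ∀ h s a, σ.toFun h s a = if a = f s then 1 else 0

/-- A pure memoryless environment policy picks the transition distribution
depending only on the current state and action. -/
def EnvPolicy.PureMemoryless {M : RMDP S A} (ρ : EnvPolicy M) : Prop :=
  ∃ g : S → A → S → ℝ, ∀ h s a, ρ.toFun h s a = g s a

/-- A run from a fixed initial state `s₀` is encoded by the sequence
`ω = (a₀, s₁), (a₁, s₂), …` of pairs consisting of the action chosen and the
state reached at each step. -/
abbrev Run (S A : Type) : Type := ℕ → A × S

/-- The sequence `s₀, s₁, s₂, …` of states visited by the run `ω` started at `s₀`. -/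
def stateSeq (s₀ : S) (ω : Run S A) : ℕ → S
  | 0 => s₀
  | n + 1 => (ω n).2

/-- The history `h_n = s₀, a₀, …, s_{n-1}, a_{n-1}` of the run `ω` started at `s₀`. -/
def histSeq (s₀ : S) (ω : Run S A) : ℕ → List (S × A)
  | 0 => []
  | n + 1 => histSeq s₀ ω n ++ [(stateSeq s₀ ω n, (ω n).1)]

/-- The probability, under policies `σ` and `ρ` with initial state `s₀`, of the
cylinder determined by the first `n` action/state pairs of the run `ω`. -/
noncomputable def prefixProb (M : RMDP S A) (σ : AgentPolicy M) (ρ : EnvPolicy M)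
    (s₀ : S) (ω : Run S A) : ℕ → ℝ
  | 0 => 1
  | n + 1 =>
      prefixProb M σ ρ s₀ ω n *
        σ.toFun (histSeq s₀ ω n) (stateSeq s₀ ω n) ((ω n).1) *
        ρ.toFun (histSeq s₀ ω n) (stateSeq s₀ ω n) ((ω n).1) (stateSeq s₀ ω (n + 1))

/-- `μ` is the probability measure `ℙ^{σ,ρ}_M(s₀)` on runs induced by the
policies `σ` and `ρ` and initial state `s₀`: it is a probability measure whose
cylinder probabilities are the ones prescribed by sampling
`a_i ∼ σ(h_i, s_i)` and `s_{i+1} ∼ ρ(h_i, s_i, a_i)` at every step. -/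
def IsRunMeasure (M : RMDP S A) (σ : AgentPolicy M) (ρ : EnvPolicy M) (s₀ : S)
    (μ : Measure (Run S A)) : Prop :=
  IsProbabilityMeasure μ ∧
    ∀ (w : Run S A) (n : ℕ),
      μ {ω : Run S A | ∀ i < n, ω i = w i} = ENNReal.ofReal (prefixProb M σ ρ s₀ w n)

/-- `Parity(c)`: the set of runs such that the maximum priority of the states
visited infinitely often is even. -/
def paritySet (c : S → ℕ) (s₀ : S) : Set (Run S A) :=
  {ω | Even (sSup {k : ℕ | ∃ t : S, c t = k ∧ ∃ᶠ i in Filter.atTop, stateSeq s₀ ω i = t})}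

/-- `Val^{s,σ}_M(Parity(c)) = inf_ρ ℙ^{σ,ρ}_M(s)[Parity(c)]`. -/
noncomputable def parityValFor (M : RMDP S A) (c : S → ℕ) (σ : AgentPolicy M) (s : S) :
    ℝ≥0∞ :=
  ⨅ ρ : EnvPolicy M, ⨅ μ : {μ : Measure (Run S A) // IsRunMeasure M σ ρ s μ},
    μ.1 (paritySet c s)

/-- `Val^{s}_M(Parity(c)) = sup_σ inf_ρ ℙ^{σ,ρ}_M(s)[Parity(c)]`. -/
noncomputable def parityVal (M : RMDP S A) (c : S → ℕ) (s : S) : ℝ≥0∞ :=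
  ⨆ σ : AgentPolicy M, parityValFor M c σ s

set_option linter.unusedSectionVars false
section Aux

variable {M : RMDP S A}

lemma stateSeq_congr {s₀ : S} {ω ω' : Run S A} {n : ℕ} (h : ∀ i < n, ω i = ω' i) :
    ∀ j ≤ n, stateSeq s₀ ω j = stateSeq s₀ ω' j := by
  intro j hj
  cases j with
  | zero => rfl
  | succ k => simp [stateSeq, h k hj]

lemma histSeq_congr {s₀ : S} {ω ω' : Run S A} {n : ℕ} (h : ∀ i < n, ω i = ω' i) :
    ∀ j ≤ n, histSeq s₀ ω j = histSeq s₀ ω' j := by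
  intro j hj
  induction j with
  | zero => rfl
  | succ k ih =>
      have hk : k ≤ n := le_of_lt hj
      simp only [histSeq, ih hk, stateSeq_congr h k hk, h k hj]

lemma sigma_nonneg (σ : AgentPolicy M) (h : List (S × A)) (s : S) (a : A) :
    0 ≤ σ.toFun h s a := σ.nonneg h s a

lemma sigma_le_one (σ : AgentPolicy M) (h : List (S × A)) (s : S) (a : A) :
    σ.toFun h s a ≤ 1 := by
  have := σ.sum_one h s
  calc σ.toFun h s a ≤ ∑ b, σ.toFun h s b :=
        Finset.single_le_sum (fun b _ => σ.nonneg h s b) (Finset.mem_univ a)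
    _ = 1 := this

lemma rho_nonneg (ρ : EnvPolicy M) (h : List (S × A)) (s : S) (a : A)
    (ha : a ∈ M.Act s) (t : S) : 0 ≤ ρ.toFun h s a t :=
  ((M.P_prob s a ha _ (ρ.mem h s a ha)).1 t)

lemma rho_sum (ρ : EnvPolicy M) (h : List (S × A)) (s : S) (a : A)
    (ha : a ∈ M.Act s) : ∑ t, ρ.toFun h s a t = 1 :=
  (M.P_prob s a ha _ (ρ.mem h s a ha)).2

lemma rho_le_one (ρ : EnvPolicy M) (h : List (S × A)) (s : S) (a : A)
    (ha : a ∈ M.Act s) (t : S) : ρ.toFun h s a t ≤ 1 := by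
  calc ρ.toFun h s a t ≤ ∑ u, ρ.toFun h s a u :=
        Finset.single_le_sum (fun u _ => rho_nonneg ρ h s a ha u) (Finset.mem_univ t)
    _ = 1 := rho_sum ρ h s a ha

/-- The one-step factor is in `[0,1]`. -/
lemma step_nonneg (σ : AgentPolicy M) (ρ : EnvPolicy M) (h : List (S × A)) (s : S) (a : A)
    (t : S) : 0 ≤ σ.toFun h s a * ρ.toFun h s a t := by
  by_cases hz : σ.toFun h s a = 0
  · simp [hz]
  · exact mul_nonneg (σ.nonneg h s a) (rho_nonneg ρ h s a (σ.mem_act h s a hz) t)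

lemma step_le_one (σ : AgentPolicy M) (ρ : EnvPolicy M) (h : List (S × A)) (s : S) (a : A)
    (t : S) : σ.toFun h s a * ρ.toFun h s a t ≤ 1 := by
  by_cases hz : σ.toFun h s a = 0
  · simp [hz]
  · have ha := σ.mem_act h s a hz
    calc σ.toFun h s a * ρ.toFun h s a t ≤ 1 * 1 :=
          mul_le_mul (sigma_le_one σ h s a) (rho_le_one ρ h s a ha t)
            (rho_nonneg ρ h s a ha t) zero_le_one
      _ = 1 := by ring

lemma prefixProb_succ (σ : AgentPolicy M) (ρ : EnvPolicy M) (s₀ : S) (ω : Run S A) (n : ℕ) :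
    prefixProb M σ ρ s₀ ω (n + 1) =
      prefixProb M σ ρ s₀ ω n *
        (σ.toFun (histSeq s₀ ω n) (stateSeq s₀ ω n) ((ω n).1) *
         ρ.toFun (histSeq s₀ ω n) (stateSeq s₀ ω n) ((ω n).1) (stateSeq s₀ ω (n + 1))) := by
  rw [prefixProb, mul_assoc]

lemma prefixProb_nonneg (σ : AgentPolicy M) (ρ : EnvPolicy M) (s₀ : S) (ω : Run S A) :
    ∀ n, 0 ≤ prefixProb M σ ρ s₀ ω n := by
  intro n
  induction n with
  | zero => simp [prefixProb]
  | succ k ih =>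
      rw [prefixProb_succ]
      exact mul_nonneg ih (step_nonneg σ ρ _ _ _ _)

lemma prefixProb_succ_le (σ : AgentPolicy M) (ρ : EnvPolicy M) (s₀ : S) (ω : Run S A) (n : ℕ) :
    prefixProb M σ ρ s₀ ω (n + 1) ≤ prefixProb M σ ρ s₀ ω n := by
  rw [prefixProb_succ]
  calc prefixProb M σ ρ s₀ ω n * _ ≤ prefixProb M σ ρ s₀ ω n * 1 :=
        mul_le_mul_of_nonneg_left (step_le_one σ ρ _ _ _ _) (prefixProb_nonneg σ ρ s₀ ω n)
    _ = _ := mul_one _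

lemma prefixProb_le_one (σ : AgentPolicy M) (ρ : EnvPolicy M) (s₀ : S) (ω : Run S A) :
    ∀ n, prefixProb M σ ρ s₀ ω n ≤ 1 := by
  intro n
  induction n with
  | zero => simp [prefixProb]
  | succ k ih => exact le_trans (prefixProb_succ_le σ ρ s₀ ω k) ih

lemma prefixProb_antitone (σ : AgentPolicy M) (ρ : EnvPolicy M) (s₀ : S) (ω : Run S A) :
    ∀ {n N : ℕ}, n ≤ N → prefixProb M σ ρ s₀ ω N ≤ prefixProb M σ ρ s₀ ω n := by
  intro n N h
  induction N with
  | zero => simp_all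
  | succ k ih =>
      rcases Nat.lt_or_ge n (k+1) with hk | hk
      · exact le_trans (prefixProb_succ_le σ ρ s₀ ω k) (ih (Nat.lt_succ_iff.mp hk))
      · have : n = k + 1 := le_antisymm h hk
        subst this; rfl

lemma prefixProb_congr (σ : AgentPolicy M) (ρ : EnvPolicy M) (s₀ : S) {ω ω' : Run S A}
    {n : ℕ} (h : ∀ i < n, ω i = ω' i) :
    prefixProb M σ ρ s₀ ω n = prefixProb M σ ρ s₀ ω' n := by
  induction n with
  | zero => rfl
  | succ k ih =>
      have h' : ∀ i < k, ω i = ω' i := fun i hi => h i (Nat.lt_succ_of_lt hi)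
      have hk : ω k = ω' k := h k (Nat.lt_succ_self k)
      have hs : stateSeq s₀ ω k = stateSeq s₀ ω' k := stateSeq_congr h k (Nat.le_succ k)
      have hs' : stateSeq s₀ ω (k+1) = stateSeq s₀ ω' (k+1) := stateSeq_congr h (k+1) le_rfl
      have hh : histSeq s₀ ω k = histSeq s₀ ω' k := histSeq_congr h k (Nat.le_succ k)
      rw [prefixProb_succ, prefixProb_succ, ih h', hs, hs', hh, hk]

/-- One-step summation identity. -/
lemma prefixProb_update_sum (σ : AgentPolicy M) (ρ : EnvPolicy M) (s₀ : S) (ω : Run S A)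
    (n : ℕ) :
    ∑ x : A × S, prefixProb M σ ρ s₀ (Function.update ω n x) (n + 1) =
      prefixProb M σ ρ s₀ ω n := by
  have key : ∀ x : A × S, prefixProb M σ ρ s₀ (Function.update ω n x) (n + 1) =
      prefixProb M σ ρ s₀ ω n *
        (σ.toFun (histSeq s₀ ω n) (stateSeq s₀ ω n) x.1 *
         ρ.toFun (histSeq s₀ ω n) (stateSeq s₀ ω n) x.1 x.2) := by
    intro x
    have hag : ∀ i < n, Function.update ω n x i = ω i := by
      intro i hi; simp [Function.update, Nat.ne_of_lt hi]
    rw [prefixProb_succ]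
    have h1 : prefixProb M σ ρ s₀ (Function.update ω n x) n = prefixProb M σ ρ s₀ ω n :=
      prefixProb_congr σ ρ s₀ hag
    have h2 : histSeq s₀ (Function.update ω n x) n = histSeq s₀ ω n :=
      histSeq_congr hag n le_rfl
    have h3 : stateSeq s₀ (Function.update ω n x) n = stateSeq s₀ ω n :=
      stateSeq_congr hag n le_rfl
    have h4 : Function.update ω n x n = x := Function.update_self n x ω
    have h5 : stateSeq s₀ (Function.update ω n x) (n+1) = x.2 := by
      simp [stateSeq, h4]
    rw [h1, h2, h3, h4, h5]
  rw [Finset.sum_congr rfl (fun x _ => key x)]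
  rw [← Finset.mul_sum]
  have : ∑ x : A × S,
      (σ.toFun (histSeq s₀ ω n) (stateSeq s₀ ω n) x.1 *
       ρ.toFun (histSeq s₀ ω n) (stateSeq s₀ ω n) x.1 x.2) = 1 := by
    rw [Fintype.sum_prod_type]
    have : ∀ a : A, ∑ t : S,
        σ.toFun (histSeq s₀ ω n) (stateSeq s₀ ω n) a *
        ρ.toFun (histSeq s₀ ω n) (stateSeq s₀ ω n) a t =
        σ.toFun (histSeq s₀ ω n) (stateSeq s₀ ω n) a := by
      intro a
      rw [← Finset.mul_sum]
      by_cases hz : σ.toFun (histSeq s₀ ω n) (stateSeq s₀ ω n) a = 0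
      · simp [hz]
      · rw [rho_sum ρ _ _ _ (σ.mem_act _ _ _ hz), mul_one]
    rw [Finset.sum_congr rfl (fun a _ => this a), σ.sum_one]
  rw [this, mul_one]

end Aux
section Existence

variable (M : RMDP S A)

/-- A default action/state pair. -/
noncomputable def defAS : A × S :=
  ((M.Act_nonempty (Classical.arbitrary S)).choose, Classical.arbitrary S)

/-- Extension of a finite word to an infinite run. -/
noncomputable def extendW {n : ℕ} (v : Fin n → A × S) : Run S A :=
  fun i => if h : i < n then v ⟨i, h⟩ else defAS M

/-- The cylinder of a finite word. -/
def cylF {n : ℕ} (v : Fin n → A × S) : Set (Run S A) :=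
  {ω | ∀ i : Fin n, ω (i : ℕ) = v i}

lemma extendW_lt {n : ℕ} (v : Fin n → A × S) {i : ℕ} (h : i < n) :
    extendW M v i = v ⟨i, h⟩ := by simp [extendW, h]

lemma extendW_mem {n : ℕ} (v : Fin n → A × S) : extendW M v ∈ cylF v := by
  intro i; simp [extendW, i.isLt]

lemma cylF_nonempty (M : RMDP S A) {n : ℕ} (v : Fin n → A × S) : (cylF v).Nonempty :=
  ⟨extendW M v, extendW_mem M v⟩

lemma mem_cylF_iff {n : ℕ} (v : Fin n → A × S) (ω : Run S A) :
    ω ∈ cylF v ↔ ∀ i < n, ω i = extendW M v i := by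
  constructor
  · intro h i hi; rw [extendW_lt M v hi]; exact h ⟨i, hi⟩
  · intro h i; rw [h i i.isLt, extendW_lt M v i.isLt]

lemma mem_cylF_snoc_iff {N : ℕ} (v : Fin N → A × S) (x : A × S) (ω : Run S A) :
    ω ∈ cylF (Fin.snoc v x) ↔ ω ∈ cylF v ∧ ω N = x := by
  constructor
  · intro h
    refine ⟨fun i => ?_, ?_⟩
    · have := h i.castSucc
      simpa [Fin.snoc_castSucc] using this
    · have := h (Fin.last N)
      simpa [Fin.snoc_last] using this
  · rintro ⟨h1, h2⟩ i
    induction i using Fin.lastCases with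
    | last => simpa [Fin.snoc_last] using h2
    | cast j => simpa [Fin.snoc_castSucc] using h1 j

lemma extendW_snoc {N : ℕ} (v : Fin N → A × S) (x : A × S) :
    extendW M (Fin.snoc v x) = Function.update (extendW M v) N x := by
  funext i
  rcases lt_trichotomy i N with hi | hi | hi
  · rw [extendW_lt M _ (Nat.lt_succ_of_lt hi), Function.update_of_ne (Nat.ne_of_lt hi),
      extendW_lt M v hi]
    have : (⟨i, Nat.lt_succ_of_lt hi⟩ : Fin (N+1)) = Fin.castSucc ⟨i, hi⟩ := rfl
    rw [this, Fin.snoc_castSucc]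
  · subst hi
    rw [extendW_lt M _ (Nat.lt_succ_self i), Function.update_self]
    have : (⟨i, Nat.lt_succ_self i⟩ : Fin (i+1)) = Fin.last i := rfl
    rw [this, Fin.snoc_last]
  · rw [Function.update_of_ne (Nat.ne_of_gt hi)]
    simp only [extendW, dif_neg (by omega : ¬ i < N + 1), dif_neg (by omega : ¬ i < N)]

/-- The equivalence `(Fin N → X) × X ≃ (Fin (N+1) → X)` by `snoc`. -/
def snocEquiv' (X : Type) (N : ℕ) : ((Fin N → X) × X) ≃ (Fin (N + 1) → X) where
  toFun p := Fin.snoc p.1 p.2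
  invFun v := (fun i => v i.castSucc, v (Fin.last N))
  left_inv p := by
    refine Prod.ext ?_ ?_
    · funext i; simp [Fin.snoc_castSucc]
    · simp [Fin.snoc_last]
  right_inv v := by
    funext i
    induction i using Fin.lastCases with
    | last => simp [Fin.snoc_last]
    | cast j => simp [Fin.snoc_castSucc]

variable (σ : AgentPolicy M) (ρ : EnvPolicy M) (s₀ : S)

/-- Sum of prefix probabilities over all length-`N` words meeting `K`. -/
noncomputable def shadowSum (K : Set (Run S A)) (N : ℕ) : ℝ≥0∞ :=
  ∑ v : Fin N → A × S,
    if (cylF v ∩ K).Nonempty then ENNReal.ofReal (prefixProb M σ ρ s₀ (extendW M v) N) else 0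

lemma shadowSum_succ_le (K : Set (Run S A)) (N : ℕ) :
    shadowSum M σ ρ s₀ K (N + 1) ≤ shadowSum M σ ρ s₀ K N := by
  rw [shadowSum, ← Equiv.sum_comp (snocEquiv' (A × S) N), Fintype.sum_prod_type]
  refine Finset.sum_le_sum fun v _ => ?_
  by_cases hv : (cylF v ∩ K).Nonempty
  · calc ∑ x : A × S, (if (cylF ((snocEquiv' (A × S) N) (v, x)) ∩ K).Nonempty
          then ENNReal.ofReal (prefixProb M σ ρ s₀ (extendW M ((snocEquiv' (A × S) N) (v, x))) (N+1)) else 0)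
        ≤ ∑ x : A × S, ENNReal.ofReal (prefixProb M σ ρ s₀ (extendW M (Fin.snoc v x)) (N+1)) := by
          refine Finset.sum_le_sum fun x _ => ?_
          split <;> simp [snocEquiv']
      _ = ENNReal.ofReal (prefixProb M σ ρ s₀ (extendW M v) N) := by
          have : ∀ x : A × S, extendW M (Fin.snoc v x) = Function.update (extendW M v) N x :=
            extendW_snoc M v
          rw [Finset.sum_congr rfl (fun x _ => by rw [this x])]
          rw [← ENNReal.ofReal_sum_of_nonneg (fun x _ => prefixProb_nonneg σ ρ s₀ _ (N+1)),
            prefixProb_update_sum σ ρ s₀ (extendW M v) N]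
      _ = _ := by rw [if_pos hv]
  · have : ∀ x : A × S, ¬ (cylF ((snocEquiv' (A × S) N) (v, x)) ∩ K).Nonempty := by
      intro x hx
      refine hv ?_
      obtain ⟨ω, hω1, hω2⟩ := hx
      exact ⟨ω, ((mem_cylF_snoc_iff v x ω).1 hω1).1, hω2⟩
    simp only [if_neg hv, if_neg (this _)]
    simp

lemma shadowSum_antitone (K : Set (Run S A)) :
    ∀ {n N : ℕ}, n ≤ N → shadowSum M σ ρ s₀ K N ≤ shadowSum M σ ρ s₀ K n := by
  intro n N h
  induction N with
  | zero => simp_all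
  | succ k ih =>
      rcases Nat.lt_or_ge n (k+1) with hk | hk
      · exact le_trans (shadowSum_succ_le M σ ρ s₀ K k) (ih (Nat.lt_succ_iff.mp hk))
      · have : n = k + 1 := le_antisymm h hk
        subst this; rfl

lemma shadowSum_succ_eq (K : Set (Run S A)) (N : ℕ)
    (hK : ∀ (v : Fin N → A × S) (x : A × S),
      (cylF v ∩ K).Nonempty → (cylF (Fin.snoc v x) ∩ K).Nonempty) :
    shadowSum M σ ρ s₀ K (N + 1) = shadowSum M σ ρ s₀ K N := by
  rw [shadowSum, ← Equiv.sum_comp (snocEquiv' (A × S) N), Fintype.sum_prod_type]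
  refine Finset.sum_congr rfl fun v _ => ?_
  by_cases hv : (cylF v ∩ K).Nonempty
  · calc ∑ x : A × S, (if (cylF ((snocEquiv' (A × S) N) (v, x)) ∩ K).Nonempty
          then ENNReal.ofReal (prefixProb M σ ρ s₀ (extendW M ((snocEquiv' (A × S) N) (v, x))) (N+1)) else 0)
        = ∑ x : A × S, ENNReal.ofReal (prefixProb M σ ρ s₀ (extendW M (Fin.snoc v x)) (N+1)) := by
          refine Finset.sum_congr rfl fun x _ => ?_
          rw [if_pos]
          · simp [snocEquiv']
          · exact hK v x hv
      _ = ENNReal.ofReal (prefixProb M σ ρ s₀ (extendW M v) N) := by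
          rw [Finset.sum_congr rfl (fun x _ => by rw [extendW_snoc M v x])]
          rw [← ENNReal.ofReal_sum_of_nonneg (fun x _ => prefixProb_nonneg σ ρ s₀ _ (N+1)),
            prefixProb_update_sum σ ρ s₀ (extendW M v) N]
      _ = _ := by rw [if_pos hv]
  · have : ∀ x : A × S, ¬ (cylF ((snocEquiv' (A × S) N) (v, x)) ∩ K).Nonempty := by
      intro x hx
      refine hv ?_
      obtain ⟨ω, hω1, hω2⟩ := hx
      exact ⟨ω, ((mem_cylF_snoc_iff v x ω).1 hω1).1, hω2⟩
    simp only [if_neg hv, if_neg (this _)]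
    simp

lemma shadowSum_zero (K : Set (Run S A)) (hK : K.Nonempty) :
    shadowSum M σ ρ s₀ K 0 = 1 := by
  rw [shadowSum]
  rw [Finset.sum_eq_single (fun i : Fin 0 => i.elim0)]
  · rw [if_pos]
    · simp [prefixProb]
    · obtain ⟨ω, hω⟩ := hK
      exact ⟨ω, fun i => i.elim0, hω⟩
  · intro v _ hv
    exact absurd (funext fun i => i.elim0) hv
  · intro hmem
    exact absurd (Finset.mem_univ _) hmem

lemma shadowSum_univ (N : ℕ) : shadowSum M σ ρ s₀ (Set.univ : Set (Run S A)) N = 1 := by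
  induction N with
  | zero => exact shadowSum_zero M σ ρ s₀ _ ⟨fun _ => defAS M, trivial⟩
  | succ k ih =>
      rw [shadowSum_succ_eq M σ ρ s₀ _ k, ih]
      intro v x _
      exact ⟨extendW M (Fin.snoc v x), extendW_mem M _, trivial⟩

lemma shadowSum_le_one (K : Set (Run S A)) (N : ℕ) : shadowSum M σ ρ s₀ K N ≤ 1 := by
  rw [← shadowSum_univ M σ ρ s₀ N]
  refine Finset.sum_le_sum fun v _ => ?_
  by_cases hv : (cylF v ∩ K).Nonempty
  · rw [if_pos hv, if_pos ⟨extendW M v, extendW_mem M v, trivial⟩]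
  · rw [if_neg hv]; simp

lemma shadowSum_mono {K₁ K₂ : Set (Run S A)} (h : K₁ ⊆ K₂) (N : ℕ) :
    shadowSum M σ ρ s₀ K₁ N ≤ shadowSum M σ ρ s₀ K₂ N := by
  refine Finset.sum_le_sum fun v _ => ?_
  by_cases hv : (cylF v ∩ K₁).Nonempty
  · rw [if_pos hv, if_pos (hv.mono (Set.inter_subset_inter_right _ h))]
  · rw [if_neg hv]; simp

lemma shadowSum_union_le (K₁ K₂ : Set (Run S A)) (N : ℕ) :
    shadowSum M σ ρ s₀ (K₁ ∪ K₂) N ≤ shadowSum M σ ρ s₀ K₁ N + shadowSum M σ ρ s₀ K₂ N := by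
  simp only [shadowSum]
  rw [← Finset.sum_add_distrib]
  refine Finset.sum_le_sum fun v _ => ?_
  by_cases hv : (cylF v ∩ (K₁ ∪ K₂)).Nonempty
  · rw [if_pos hv]
    rw [Set.inter_union_distrib_left, Set.union_nonempty] at hv
    rcases hv with hv | hv
    · rw [if_pos hv]
      exact le_add_right le_rfl
    · rw [if_pos hv]
      exact le_add_left le_rfl
  · rw [if_neg hv]; simp

/-- The candidate measure value. -/
noncomputable def lambF (K : Set (Run S A)) : ℝ≥0∞ := ⨅ N, shadowSum M σ ρ s₀ K N

end Existence
section Existence2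

variable (M : RMDP S A) (σ : AgentPolicy M) (ρ : EnvPolicy M) (s₀ : S)

lemma iInf_tail_eq (g : ℕ → ℝ≥0∞) (hg : ∀ {a b : ℕ}, a ≤ b → g b ≤ g a) (k : ℕ) :
    ⨅ N, g (k + N) = ⨅ N, g N := by
  refine le_antisymm (le_iInf fun N => iInf_le_of_le N (hg (Nat.le_add_left N k)))
    (le_iInf fun N => iInf_le _ (k + N))

lemma lambF_le_one (K : Set (Run S A)) : lambF M σ ρ s₀ K ≤ 1 :=
  le_trans (iInf_le _ 0) (shadowSum_le_one M σ ρ s₀ K 0)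

lemma lambF_ne_top (K : Set (Run S A)) : lambF M σ ρ s₀ K ≠ ⊤ :=
  fun h => absurd (h ▸ lambF_le_one M σ ρ s₀ K) (by simp)

lemma lambF_mono {K₁ K₂ : Set (Run S A)} (h : K₁ ⊆ K₂) :
    lambF M σ ρ s₀ K₁ ≤ lambF M σ ρ s₀ K₂ :=
  le_iInf fun N => iInf_le_of_le N (shadowSum_mono M σ ρ s₀ h N)

lemma lambF_univ : lambF M σ ρ s₀ (Set.univ : Set (Run S A)) = 1 := by
  refine le_antisymm (lambF_le_one M σ ρ s₀ _) (le_iInf fun N => ?_)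
  rw [shadowSum_univ]

lemma lambF_union_le (K₁ K₂ : Set (Run S A)) :
    lambF M σ ρ s₀ (K₁ ∪ K₂) ≤ lambF M σ ρ s₀ K₁ + lambF M σ ρ s₀ K₂ := by
  rw [lambF, lambF, lambF, ENNReal.iInf_add_iInf (fun i j => ⟨max i j,
    add_le_add (shadowSum_antitone M σ ρ s₀ K₁ (le_max_left i j))
      (shadowSum_antitone M σ ρ s₀ K₂ (le_max_right i j))⟩)]
  exact le_iInf fun N => iInf_le_of_le N (shadowSum_union_le M σ ρ s₀ K₁ K₂ N)

lemma shadowSum_cyl_self {n : ℕ} (v₀ : Fin n → A × S) :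
    shadowSum M σ ρ s₀ (cylF v₀) n = ENNReal.ofReal (prefixProb M σ ρ s₀ (extendW M v₀) n) := by
  rw [shadowSum, Finset.sum_eq_single v₀]
  · rw [if_pos ⟨extendW M v₀, extendW_mem M v₀, extendW_mem M v₀⟩]
  · intro v _ hv
    rw [if_neg]
    rintro ⟨ω, hω1, hω2⟩
    exact hv (funext fun i => (hω1 i).symm.trans (hω2 i))
  · intro hmem
    exact absurd (Finset.mem_univ _) hmem

lemma shadowSum_cyl_ge {n N : ℕ} (hn : n ≤ N) (v₀ : Fin n → A × S) :
    shadowSum M σ ρ s₀ (cylF v₀) N = ENNReal.ofReal (prefixProb M σ ρ s₀ (extendW M v₀) n) := by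
  obtain ⟨k, rfl⟩ := Nat.exists_eq_add_of_le hn
  induction k with
  | zero => simpa using shadowSum_cyl_self M σ ρ s₀ v₀
  | succ j ih =>
      have : n + (j + 1) = (n + j) + 1 := rfl
      rw [this, shadowSum_succ_eq M σ ρ s₀ (cylF v₀) (n + j), ih (Nat.le_add_right n j)]
      intro v x hv
      obtain ⟨ω, hω1, hω2⟩ := hv
      refine ⟨Function.update ω (n + j) x, ?_, ?_⟩
      · rw [mem_cylF_snoc_iff]
        refine ⟨fun i => ?_, Function.update_self _ _ _⟩
        rw [Function.update_of_ne (by exact_mod_cast Nat.ne_of_lt i.isLt)]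
        exact hω1 i
      · intro i
        rw [Function.update_of_ne (by exact_mod_cast Nat.ne_of_lt (lt_of_lt_of_le i.isLt (Nat.le_add_right n j)))]
        exact hω2 i

lemma lambF_cyl {n : ℕ} (v₀ : Fin n → A × S) :
    lambF M σ ρ s₀ (cylF v₀) = ENNReal.ofReal (prefixProb M σ ρ s₀ (extendW M v₀) n) := by
  refine le_antisymm (iInf_le_of_le n (le_of_eq (shadowSum_cyl_self M σ ρ s₀ v₀)))
    (le_iInf fun N => ?_)
  rcases le_total n N with hn | hn
  · rw [shadowSum_cyl_ge M σ ρ s₀ hn v₀]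
  · rw [← shadowSum_cyl_self M σ ρ s₀ v₀]
    exact shadowSum_antitone M σ ρ s₀ _ hn

end Existence2

section Existence3

variable [TopologicalSpace S] [DiscreteTopology S] [TopologicalSpace A] [DiscreteTopology A]

lemma cylN_isOpen (w : Run S A) (n : ℕ) :
    IsOpen {ω : Run S A | ∀ i < n, ω i = w i} := by
  have : {ω : Run S A | ∀ i < n, ω i = w i} =
      ⋂ i ∈ Finset.range n, (fun ω : Run S A => ω i) ⁻¹' {w i} := by
    ext ω; simp [Set.mem_iInter]
  rw [this]
  exact isOpen_biInter_finset fun i _ =>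
    (continuous_apply i).isOpen_preimage _ (isOpen_discrete _)

lemma cylN_isClosed (w : Run S A) (n : ℕ) :
    IsClosed {ω : Run S A | ∀ i < n, ω i = w i} := by
  have : {ω : Run S A | ∀ i < n, ω i = w i} =
      ⋂ i, ⋂ (_ : i ∈ Finset.range n), (fun ω : Run S A => ω i) ⁻¹' {w i} := by
    ext ω; simp [Set.mem_iInter]
  rw [this]
  exact isClosed_iInter fun i => isClosed_iInter fun _ =>
    IsClosed.preimage (continuous_apply i) isClosed_singleton

lemma cylF_eq_iInter {n : ℕ} (v : Fin n → A × S) :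
    cylF v = ⋂ i : Fin n, (fun ω : Run S A => ω (i : ℕ)) ⁻¹' {v i} := by
  ext ω; simp [cylF, Set.mem_iInter]

lemma cylF_isOpen {n : ℕ} (v : Fin n → A × S) : IsOpen (cylF v) := by
  rw [cylF_eq_iInter]
  exact isOpen_iInter_of_finite fun i =>
    (continuous_apply (i : ℕ)).isOpen_preimage _ (isOpen_discrete _)

lemma cylF_isClosed {n : ℕ} (v : Fin n → A × S) : IsClosed (cylF v) := by
  rw [cylF_eq_iInter]
  exact isClosed_iInter fun i =>
    IsClosed.preimage (continuous_apply (i : ℕ)) isClosed_singleton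

lemma cylF_isCompact (M : RMDP S A) {n : ℕ} (v : Fin n → A × S) : IsCompact (cylF v) :=
  (cylF_isClosed v).isCompact

lemma exists_cyl_subset {U : Set (Run S A)} (hU : IsOpen U) {x : Run S A} (hx : x ∈ U) :
    ∃ n : ℕ, ∀ ω : Run S A, (∀ i < n, ω i = x i) → ω ∈ U := by
  rcases isOpen_pi_iff.1 hU x hx with ⟨I, u, hu, hsub⟩
  refine ⟨(I.sup id) + 1, fun ω hω => hsub ?_⟩
  intro i hi
  have hii : ω i = x i := hω i (Nat.lt_succ_of_le (Finset.le_sup (f := id) hi))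
  rw [hii]; exact (hu i hi).2

lemma exists_sep (K₁ K₂ : Set (Run S A)) (h₁ : IsCompact K₁) (h₂ : IsClosed K₂)
    (hd : Disjoint K₁ K₂) :
    ∃ N₀ : ℕ, ∀ N, N₀ ≤ N → ∀ v : Fin N → A × S,
      ¬((cylF v ∩ K₁).Nonempty ∧ (cylF v ∩ K₂).Nonempty) := by
  have hx : ∀ x ∈ K₁, ∃ n : ℕ, ∀ ω : Run S A, (∀ i < n, ω i = x i) → ω ∈ K₂ᶜ := by
    intro x hxK
    exact exists_cyl_subset h₂.isOpen_compl (Set.disjoint_left.1 hd hxK)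
  choose! nn hnn using hx
  obtain ⟨t, htK, hcov⟩ := h₁.elim_nhds_subcover (fun x => {ω : Run S A | ∀ i < nn x, ω i = x i})
    (fun x hxK => (cylN_isOpen x (nn x)).mem_nhds (fun i _ => rfl))
  refine ⟨t.sup nn, fun N hN v ⟨⟨y, hy1, hyK⟩, ⟨z, hz1, hzK⟩⟩ => ?_⟩
  obtain ⟨x, hxt, hyU⟩ := Set.mem_iUnion₂.1 (hcov hyK)
  have hz2 : z ∈ K₂ᶜ := by
    refine hnn x (htK x hxt) z fun i hi => ?_
    have hiN : i < N := lt_of_lt_of_le (lt_of_lt_of_le hi (Finset.le_sup hxt)) hN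
    have : z i = y i := (hz1 ⟨i, hiN⟩).trans (hy1 ⟨i, hiN⟩).symm
    rw [this]; exact hyU i hi
  exact hz2 hzK

variable (M : RMDP S A) (σ : AgentPolicy M) (ρ : EnvPolicy M) (s₀ : S)

lemma shadowSum_union_of_sep (K₁ K₂ : Set (Run S A)) (N : ℕ)
    (hsep : ∀ v : Fin N → A × S, ¬((cylF v ∩ K₁).Nonempty ∧ (cylF v ∩ K₂).Nonempty)) :
    shadowSum M σ ρ s₀ (K₁ ∪ K₂) N = shadowSum M σ ρ s₀ K₁ N + shadowSum M σ ρ s₀ K₂ N := by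
  simp only [shadowSum]
  rw [← Finset.sum_add_distrib]
  refine Finset.sum_congr rfl fun v _ => ?_
  by_cases h1 : (cylF v ∩ K₁).Nonempty
  · have h2 : ¬ (cylF v ∩ K₂).Nonempty := fun h2 => hsep v ⟨h1, h2⟩
    rw [if_pos (h1.mono (Set.inter_subset_inter_right _ Set.subset_union_left)),
      if_pos h1, if_neg h2, add_zero]
  · by_cases h2 : (cylF v ∩ K₂).Nonempty
    · rw [if_pos (h2.mono (Set.inter_subset_inter_right _ Set.subset_union_right)),
        if_neg h1, if_pos h2, zero_add]
    · rw [if_neg, if_neg h1, if_neg h2, add_zero]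
      rw [Set.inter_union_distrib_left, Set.union_nonempty]
      rintro (h | h)
      exacts [h1 h, h2 h]

lemma lambF_union_of_disjoint (K₁ K₂ : Set (Run S A)) (h₁ : IsCompact K₁) (h₂ : IsClosed K₂)
    (hd : Disjoint K₁ K₂) :
    lambF M σ ρ s₀ (K₁ ∪ K₂) = lambF M σ ρ s₀ K₁ + lambF M σ ρ s₀ K₂ := by
  refine le_antisymm (lambF_union_le M σ ρ s₀ K₁ K₂) ?_
  obtain ⟨N₀, hN₀⟩ := exists_sep K₁ K₂ h₁ h₂ hd
  have tail : ∀ K : Set (Run S A), lambF M σ ρ s₀ K = ⨅ N, shadowSum M σ ρ s₀ K (N₀ + N) := by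
    intro K
    rw [lambF, ← iInf_tail_eq (fun N => shadowSum M σ ρ s₀ K N)
      (fun {a b} hab => shadowSum_antitone M σ ρ s₀ K hab) N₀]
  rw [tail (K₁ ∪ K₂), tail K₁, tail K₂]
  have hadd := ENNReal.iInf_add_iInf (f := fun N => shadowSum M σ ρ s₀ K₁ (N₀ + N))
    (g := fun N => shadowSum M σ ρ s₀ K₂ (N₀ + N)) (fun i j => ⟨max i j,
      add_le_add (shadowSum_antitone M σ ρ s₀ K₁ (Nat.add_le_add_left (le_max_left i j) N₀))
        (shadowSum_antitone M σ ρ s₀ K₂ (Nat.add_le_add_left (le_max_right i j) N₀))⟩)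
  rw [hadd]
  exact le_iInf fun N => iInf_le_of_le N
    (le_of_eq (shadowSum_union_of_sep M σ ρ s₀ K₁ K₂ _ (hN₀ _ (Nat.le_add_right N₀ N))).symm)

end Existence3
section Existence4

variable [TopologicalSpace S] [DiscreteTopology S] [TopologicalSpace A] [DiscreteTopology A]
variable (M : RMDP S A) (σ : AgentPolicy M) (ρ : EnvPolicy M) (s₀ : S)

/-- The content on compact subsets of the run space. -/
noncomputable def runContent : Content (Run S A) where
  toFun K := (lambF M σ ρ s₀ K.1).toNNReal
  mono' K₁ K₂ h := ENNReal.toNNReal_mono (lambF_ne_top M σ ρ s₀ _) (lambF_mono M σ ρ s₀ h)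
  sup_disjoint' K₁ K₂ hd h₁ h₂ := by
    change (lambF M σ ρ s₀ (K₁.carrier ∪ K₂.carrier)).toNNReal =
      (lambF M σ ρ s₀ K₁.carrier).toNNReal + (lambF M σ ρ s₀ K₂.carrier).toNNReal
    rw [lambF_union_of_disjoint M σ ρ s₀ K₁.carrier K₂.carrier K₁.2 h₂ hd,
      ENNReal.toNNReal_add (lambF_ne_top M σ ρ s₀ _) (lambF_ne_top M σ ρ s₀ _)]
  sup_le' K₁ K₂ := by
    change (lambF M σ ρ s₀ (K₁.carrier ∪ K₂.carrier)).toNNReal ≤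
      (lambF M σ ρ s₀ K₁.carrier).toNNReal + (lambF M σ ρ s₀ K₂.carrier).toNNReal
    refine le_trans (ENNReal.toNNReal_mono ?_ (lambF_union_le M σ ρ s₀ _ _)) ?_
    · exact ENNReal.add_ne_top.2 ⟨lambF_ne_top M σ ρ s₀ _, lambF_ne_top M σ ρ s₀ _⟩
    · rw [ENNReal.toNNReal_add (lambF_ne_top M σ ρ s₀ _) (lambF_ne_top M σ ρ s₀ _)]


/-- The induced run measure. -/
noncomputable def runMeasure : Measure (Run S A) := (runContent M σ ρ s₀).measure

lemma runContent_apply (K : TopologicalSpace.Compacts (Run S A)) :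
    (runContent M σ ρ s₀ K : ℝ≥0∞) = lambF M σ ρ s₀ K.1 := by
  show ((lambF M σ ρ s₀ K.1).toNNReal : ℝ≥0∞) = _
  exact ENNReal.coe_toNNReal (lambF_ne_top M σ ρ s₀ _)

lemma runMeasure_of_isCompact_isOpen {K : Set (Run S A)} (h1 : IsCompact K) (h2 : IsOpen K) :
    runMeasure M σ ρ s₀ K = lambF M σ ρ s₀ K := by
  rw [runMeasure, Content.measure_apply _ h2.measurableSet,
    Content.outerMeasure_of_isOpen _ K h2,
    Content.innerContent_of_isCompact _ h1 h2, runContent_apply]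

lemma runMeasure_cylF {n : ℕ} (v : Fin n → A × S) :
    runMeasure M σ ρ s₀ (cylF v) =
      ENNReal.ofReal (prefixProb M σ ρ s₀ (extendW M v) n) := by
  rw [runMeasure_of_isCompact_isOpen M σ ρ s₀ (cylF_isCompact M v) (cylF_isOpen v),
    lambF_cyl]

lemma runMeasure_univ : runMeasure M σ ρ s₀ (Set.univ : Set (Run S A)) = 1 := by
  rw [runMeasure_of_isCompact_isOpen M σ ρ s₀ isCompact_univ isOpen_univ, lambF_univ]

theorem isRunMeasure_runMeasure : IsRunMeasure M σ ρ s₀ (runMeasure M σ ρ s₀) := by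
  refine ⟨⟨runMeasure_univ M σ ρ s₀⟩, fun w n => ?_⟩
  have hset : {ω : Run S A | ∀ i < n, ω i = w i} = cylF (fun i : Fin n => w i) := by
    ext ω
    constructor
    · intro hω i; exact hω i i.isLt
    · intro hω i hi; exact hω ⟨i, hi⟩
  rw [hset, runMeasure_cylF]
  refine congrArg ENNReal.ofReal (prefixProb_congr σ ρ s₀ fun i hi => ?_)
  rw [extendW_lt M _ hi]

end Existence4

theorem exists_runMeasure (M : RMDP S A) (σ : AgentPolicy M) (ρ : EnvPolicy M) (s₀ : S) :
    ∃ μ : Measure (Run S A), IsRunMeasure M σ ρ s₀ μ := by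
  letI : TopologicalSpace S := ⊥
  haveI : DiscreteTopology S := ⟨rfl⟩
  letI : TopologicalSpace A := ⊥
  haveI : DiscreteTopology A := ⟨rfl⟩
  exact ⟨runMeasure M σ ρ s₀, isRunMeasure_runMeasure M σ ρ s₀⟩
section Meas

lemma measurable_stateSeq (s₀ : S) (i : ℕ) :
    Measurable (fun ω : Run S A => stateSeq s₀ ω i) := by
  cases i with
  | zero => exact measurable_const
  | succ j =>
      have : (fun ω : Run S A => stateSeq s₀ ω (j+1)) = fun ω => (ω j).2 := rfl
      rw [this]
      exact measurable_snd.comp (measurable_pi_apply j)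

lemma measurableSet_freq (s₀ : S) (t : S) :
    MeasurableSet {ω : Run S A | ∃ᶠ i in Filter.atTop, stateSeq s₀ ω i = t} := by
  have : {ω : Run S A | ∃ᶠ i in Filter.atTop, stateSeq s₀ ω i = t} =
      ⋂ N : ℕ, ⋃ i : ℕ, ⋃ (_ : N ≤ i), {ω : Run S A | stateSeq s₀ ω i = t} := by
    ext ω
    simp [Filter.frequently_atTop]
  rw [this]
  refine MeasurableSet.iInter fun N => MeasurableSet.iUnion fun i => MeasurableSet.iUnion fun _ => ?_
  exact (measurable_stateSeq s₀ i) (measurableSet_singleton t)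

lemma measurableSet_paritySet (c : S → ℕ) (s₀ : S) :
    MeasurableSet (paritySet c s₀ : Set (Run S A)) := by
  have hrepr : (paritySet c s₀ : Set (Run S A)) =
      ⋃ (T : Finset S), ⋃ (_ : Even (sSup (c '' (T : Set S)))),
        {ω : Run S A | ∀ t : S, (∃ᶠ i in Filter.atTop, stateSeq s₀ ω i = t) ↔ t ∈ T} := by
    ext ω
    constructor
    · intro hω
      refine Set.mem_iUnion.2 ⟨(Set.toFinite {t : S | ∃ᶠ i in Filter.atTop,
        stateSeq s₀ ω i = t}).toFinset, Set.mem_iUnion.2 ⟨?_, fun t => by simp⟩⟩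
      have hset : c '' ((Set.toFinite {t : S | ∃ᶠ i in Filter.atTop,
          stateSeq s₀ ω i = t}).toFinset : Set S) =
          {k : ℕ | ∃ t : S, c t = k ∧ ∃ᶠ i in Filter.atTop, stateSeq s₀ ω i = t} := by
        ext k
        simp [Set.mem_image, eq_comm]
        tauto
      rw [hset]
      exact hω
    · intro hω
      obtain ⟨T, hT⟩ := Set.mem_iUnion.1 hω
      obtain ⟨hEven, hmem⟩ := Set.mem_iUnion.1 hT
      have hset : {k : ℕ | ∃ t : S, c t = k ∧ ∃ᶠ i in Filter.atTop, stateSeq s₀ ω i = t} =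
          c '' (T : Set S) := by
        ext k
        simp only [Set.mem_setOf_eq, Set.mem_image, Finset.mem_coe]
        constructor
        · rintro ⟨t, rfl, hfreq⟩; exact ⟨t, (hmem t).1 hfreq, rfl⟩
        · rintro ⟨t, ht, rfl⟩; exact ⟨t, rfl, (hmem t).2 ht⟩
      show Even (sSup {k : ℕ | ∃ t : S, c t = k ∧ ∃ᶠ i in Filter.atTop, stateSeq s₀ ω i = t})
      rw [hset]
      exact hEven
  rw [hrepr]
  refine MeasurableSet.iUnion fun T => MeasurableSet.iUnion fun _ => ?_
  have : {ω : Run S A | ∀ t : S, (∃ᶠ i in Filter.atTop, stateSeq s₀ ω i = t) ↔ t ∈ T} =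
      ⋂ t : S, (if t ∈ T then {ω : Run S A | ∃ᶠ i in Filter.atTop, stateSeq s₀ ω i = t}
        else {ω : Run S A | ∃ᶠ i in Filter.atTop, stateSeq s₀ ω i = t}ᶜ) := by
    ext ω
    simp only [Set.mem_iInter, Set.mem_setOf_eq]
    constructor
    · intro hω t
      by_cases ht : t ∈ T
      · rw [if_pos ht]; exact (hω t).2 ht
      · rw [if_neg ht]; exact fun hf => ht ((hω t).1 hf)
    · intro hω t
      have := hω t
      by_cases ht : t ∈ T
      · rw [if_pos ht] at this; exact ⟨fun _ => ht, fun _ => this⟩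
      · rw [if_neg ht] at this
        exact ⟨fun hf => absurd hf this, fun hmem => absurd hmem ht⟩
  rw [this]
  refine MeasurableSet.iInter fun t => ?_
  by_cases ht : t ∈ T
  · rw [if_pos ht]; exact measurableSet_freq s₀ t
  · rw [if_neg ht]; exact (measurableSet_freq s₀ t).compl

/-- The shift of a run by `n` steps. -/
def shiftRun (n : ℕ) : Run S A → Run S A := fun ω i => ω (n + i)

lemma measurable_shiftRun (n : ℕ) : Measurable (shiftRun (S := S) (A := A) n) :=
  measurable_pi_lambda _ fun i => measurable_pi_apply (n + i)

lemma stateSeq_shift {s₀ : S} {ω w : Run S A} {n : ℕ} (hω : ∀ i < n, ω i = w i) :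
    ∀ j : ℕ, stateSeq (stateSeq s₀ w n) (shiftRun n ω) j = stateSeq s₀ ω (n + j) := by
  intro j
  cases j with
  | zero =>
      show stateSeq s₀ w n = stateSeq s₀ ω (n + 0)
      rw [Nat.add_zero]
      exact (stateSeq_congr hω n le_rfl).symm
  | succ k =>
      show (shiftRun n ω k).2 = stateSeq s₀ ω (n + (k + 1))
      have : n + (k + 1) = (n + k) + 1 := rfl
      rw [this]
      rfl

lemma frequently_shift_iff (n : ℕ) (p : ℕ → Prop) :
    (∃ᶠ j in Filter.atTop, p (n + j)) ↔ (∃ᶠ i in Filter.atTop, p i) := by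
  rw [Filter.frequently_atTop, Filter.frequently_atTop]
  constructor
  · intro H N
    obtain ⟨j, hj, hp⟩ := H N
    exact ⟨n + j, by omega, hp⟩
  · intro H N
    obtain ⟨i, hi, hp⟩ := H (N + n)
    refine ⟨i - n, by omega, ?_⟩
    have : n + (i - n) = i := by omega
    rw [this]
    exact hp

lemma shift_mem_paritySet_iff (c : S → ℕ) {s₀ : S} {ω w : Run S A} {n : ℕ}
    (hω : ∀ i < n, ω i = w i) :
    shiftRun n ω ∈ paritySet c (stateSeq s₀ w n) ↔ ω ∈ paritySet c s₀ := by
  have hfreq : ∀ t : S,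
      (∃ᶠ j in Filter.atTop, stateSeq (stateSeq s₀ w n) (shiftRun n ω) j = t) ↔
      (∃ᶠ i in Filter.atTop, stateSeq s₀ ω i = t) := by
    intro t
    have h1 : ∀ j : ℕ, (stateSeq (stateSeq s₀ w n) (shiftRun n ω) j = t) ↔
        (stateSeq s₀ ω (n + j) = t) := by
      intro j; rw [stateSeq_shift hω j]
    rw [Filter.frequently_congr (Filter.Eventually.of_forall fun j => h1 j)]
    exact frequently_shift_iff n (fun i => stateSeq s₀ ω i = t)
  show Even _ ↔ Even _
  have : {k : ℕ | ∃ t : S, c t = k ∧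
        ∃ᶠ j in Filter.atTop, stateSeq (stateSeq s₀ w n) (shiftRun n ω) j = t} =
      {k : ℕ | ∃ t : S, c t = k ∧ ∃ᶠ i in Filter.atTop, stateSeq s₀ ω i = t} := by
    ext k
    simp only [Set.mem_setOf_eq]
    constructor
    · rintro ⟨t, rfl, hf⟩; exact ⟨t, rfl, (hfreq t).1 hf⟩
    · rintro ⟨t, rfl, hf⟩; exact ⟨t, rfl, (hfreq t).2 hf⟩
  show Even (sSup {k : ℕ | ∃ t : S, c t = k ∧
      ∃ᶠ j in Filter.atTop, stateSeq (stateSeq s₀ w n) (shiftRun n ω) j = t}) ↔ Even _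
  rw [this]

end Meas
section Key

variable {M : RMDP S A}

lemma measurableSet_cylN (w : Run S A) (n : ℕ) :
    MeasurableSet {ω : Run S A | ∀ i < n, ω i = w i} := by
  have : {ω : Run S A | ∀ i < n, ω i = w i} =
      ⋂ i, ⋂ (_ : i ∈ Finset.range n), (fun ω : Run S A => ω i) ⁻¹' {w i} := by
    ext ω; simp [Set.mem_iInter]
  rw [this]
  exact MeasurableSet.iInter fun i => MeasurableSet.iInter fun _ =>
    (measurable_pi_apply i) (measurableSet_singleton (w i))

/-- Environment policy shifted by a fixed history. -/
def shiftEnv (M : RMDP S A) (ρ : EnvPolicy M) (H : List (S × A)) : EnvPolicy M :=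
  ⟨fun h s a => ρ.toFun (H ++ h) s a, fun h s a ha => ρ.mem (H ++ h) s a ha⟩

lemma concat_run_state (w v : Run S A) (s₀ : S) (n : ℕ) :
    ∀ j : ℕ, stateSeq s₀ (fun i => if i < n then w i else v (i - n)) (n + j) =
      stateSeq (stateSeq s₀ w n) v j := by
  intro j
  induction j with
  | zero =>
      show stateSeq s₀ _ (n + 0) = stateSeq s₀ w n
      rw [Nat.add_zero]
      exact stateSeq_congr (fun i hi => if_pos hi) n le_rfl
  | succ k _ =>
      have h1 : n + (k + 1) = (n + k) + 1 := rfl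
      rw [h1]
      show ((fun i => if i < n then w i else v (i - n)) (n + k)).2 = (v k).2
      have h2 : ¬ (n + k < n) := by omega
      have h3 : n + k - n = k := by omega
      simp only [if_neg h2, h3]

lemma concat_run_hist (w v : Run S A) (s₀ : S) (n : ℕ) :
    ∀ j : ℕ, histSeq s₀ (fun i => if i < n then w i else v (i - n)) (n + j) =
      histSeq s₀ w n ++ histSeq (stateSeq s₀ w n) v j := by
  intro j
  induction j with
  | zero =>
      show histSeq s₀ _ (n + 0) = _
      rw [Nat.add_zero]
      have : histSeq (stateSeq s₀ w n) v 0 = [] := rfl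
      rw [this, List.append_nil]
      exact histSeq_congr (fun i hi => if_pos hi) n le_rfl
  | succ k ih =>
      have h1 : n + (k + 1) = (n + k) + 1 := rfl
      rw [h1]
      show histSeq s₀ _ (n + k) ++ _ = _
      rw [ih, concat_run_state w v s₀ n k]
      have h2 : ¬ (n + k < n) := by omega
      have h3 : n + k - n = k := by omega
      simp only [if_neg h2, h3]
      rw [List.append_assoc]
      rfl

lemma prefixProb_factor (σ : AgentPolicy M) (hσ : σ.PureMemoryless) (ρ : EnvPolicy M)
    (s₀ : S) (w v : Run S A) (n : ℕ) :
    ∀ k : ℕ, prefixProb M σ ρ s₀ (fun i => if i < n then w i else v (i - n)) (n + k) =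
      prefixProb M σ ρ s₀ w n *
        prefixProb M σ (shiftEnv M ρ (histSeq s₀ w n)) (stateSeq s₀ w n) v k := by
  obtain ⟨f, hf⟩ := hσ
  intro k
  induction k with
  | zero =>
      show prefixProb M σ ρ s₀ _ (n + 0) = _ * prefixProb M σ _ _ v 0
      rw [Nat.add_zero]
      have h0 : prefixProb M σ (shiftEnv M ρ (histSeq s₀ w n)) (stateSeq s₀ w n) v 0 = 1 := rfl
      rw [h0, mul_one]
      exact prefixProb_congr σ ρ s₀ (fun i hi => if_pos hi)
  | succ k ih =>
      have h2 : ¬ (n + k < n) := by omega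
      have h3 : n + k - n = k := by omega
      rw [show n + (k + 1) = (n + k) + 1 from rfl, prefixProb_succ, ih, prefixProb_succ]
      rw [concat_run_hist w v s₀ n k, concat_run_state w v s₀ n k]
      simp only [if_neg h2, h3]
      rw [show (n + k) + 1 = n + (k + 1) from rfl, concat_run_state w v s₀ n (k + 1)]
      have hσeq : ∀ (L L' : List (S × A)) (s : S) (a : A), σ.toFun L s a = σ.toFun L' s a := by
        intro L L' s a; rw [hf, hf]
      rw [hσeq (histSeq s₀ w n ++ histSeq (stateSeq s₀ w n) v k)
        (histSeq (stateSeq s₀ w n) v k)]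
      have hρeq : ρ.toFun (histSeq s₀ w n ++ histSeq (stateSeq s₀ w n) v k) =
          (shiftEnv M ρ (histSeq s₀ w n)).toFun (histSeq (stateSeq s₀ w n) v k) := rfl
      rw [hρeq]
      ring

lemma key_cylinder_bound (c : S → ℕ) (σ : AgentPolicy M) (hσ : σ.PureMemoryless)
    {m : ℝ≥0∞} (h : ∀ s : S, m ≤ parityValFor M c σ s)
    (ρ : EnvPolicy M) (s₀ : S) {μ : Measure (Run S A)} (hμ : IsRunMeasure M σ ρ s₀ μ)
    (w : Run S A) (n : ℕ) :
    m * μ {ω : Run S A | ∀ i < n, ω i = w i} ≤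
      μ (paritySet c s₀ ∩ {ω : Run S A | ∀ i < n, ω i = w i}) := by
  obtain ⟨hprob, hcyl⟩ := hμ
  haveI := hprob
  set C : Set (Run S A) := {ω : Run S A | ∀ i < n, ω i = w i} with hCdef
  have hCmeas : MeasurableSet C := measurableSet_cylN w n
  by_cases h0 : μ C = 0
  · rw [h0, mul_zero]; exact zero_le
  have hfin : μ C ≠ ⊤ := measure_ne_top μ C
  set ρ' : EnvPolicy M := shiftEnv M ρ (histSeq s₀ w n) with hρ'
  set ν : Measure (Run S A) := (μ C)⁻¹ • Measure.map (shiftRun n) (μ.restrict C) with hν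
  have hmap : ∀ E : Set (Run S A), MeasurableSet E →
      ν E = (μ C)⁻¹ * μ ((shiftRun n) ⁻¹' E ∩ C) := by
    intro E hE
    rw [hν, Measure.smul_apply, Measure.map_apply (measurable_shiftRun n) hE,
      Measure.restrict_apply ((measurable_shiftRun n) hE)]
    rfl
  have hcyl' : ∀ (v : Run S A) (k : ℕ),
      ν {ω : Run S A | ∀ i < k, ω i = v i} =
        ENNReal.ofReal (prefixProb M σ ρ' (stateSeq s₀ w n) v k) := by
    intro v k
    have hpre : (shiftRun n) ⁻¹' {ω : Run S A | ∀ i < k, ω i = v i} ∩ C =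
        {ω : Run S A | ∀ i < n + k, ω i = (fun i => if i < n then w i else v (i - n)) i} := by
      ext ω
      constructor
      · rintro ⟨h1, h2⟩ i hi
        show ω i = if i < n then w i else v (i - n)
        by_cases hin : i < n
        · rw [if_pos hin]; exact h2 i hin
        · rw [if_neg hin]
          have hik : i - n < k := by omega
          have hthis : ω (n + (i - n)) = v (i - n) := h1 (i - n) hik
          have harith : n + (i - n) = i := by omega
          rw [harith] at hthis
          exact hthis
      · intro h1
        constructor
        · intro j hj
          have h2 : ¬ (n + j < n) := by omega
          have h3 : n + j - n = j := by omega
          have hthis : ω (n + j) = if n + j < n then w (n + j) else v (n + j - n) :=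
            h1 (n + j) (by omega)
          rw [if_neg h2, h3] at hthis
          exact hthis
        · intro i hi
          have hthis : ω i = if i < n then w i else v (i - n) := h1 i (by omega)
          rw [if_pos hi] at hthis
          exact hthis
    rw [hmap _ (measurableSet_cylN v k), hpre, hcyl _ (n + k),
      prefixProb_factor σ hσ ρ s₀ w v n k,
      ENNReal.ofReal_mul (prefixProb_nonneg σ ρ s₀ w n)]
    have hCval : μ C = ENNReal.ofReal (prefixProb M σ ρ s₀ w n) := hcyl w n
    rw [← hCval, ← mul_assoc, ENNReal.inv_mul_cancel h0 hfin, one_mul]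
  have hprobν : IsProbabilityMeasure ν := by
    constructor
    rw [hmap Set.univ MeasurableSet.univ, Set.preimage_univ, Set.univ_inter,
      ENNReal.inv_mul_cancel h0 hfin]
  have hRunν : IsRunMeasure M σ ρ' (stateSeq s₀ w n) ν := ⟨hprobν, hcyl'⟩
  have hval : m ≤ ν (paritySet c (stateSeq s₀ w n)) := by
    refine le_trans (h (stateSeq s₀ w n)) ?_
    exact le_trans (iInf_le _ ρ') (iInf_le _ (⟨ν, hRunν⟩ : {μ : Measure (Run S A) // IsRunMeasure M σ ρ' (stateSeq s₀ w n) μ}))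
  have hseteq : (shiftRun n) ⁻¹' (paritySet c (stateSeq s₀ w n)) ∩ C = paritySet c s₀ ∩ C := by
    ext ω
    constructor
    · rintro ⟨h1, h2⟩
      exact ⟨(shift_mem_paritySet_iff c h2).1 h1, h2⟩
    · rintro ⟨h1, h2⟩
      exact ⟨(shift_mem_paritySet_iff c h2).2 h1, h2⟩
  have hparity : ν (paritySet c (stateSeq s₀ w n)) = (μ C)⁻¹ * μ (paritySet c s₀ ∩ C) := by
    rw [hmap _ (measurableSet_paritySet c (stateSeq s₀ w n)), hseteq]
  rw [hparity] at hval
  calc m * μ C ≤ ((μ C)⁻¹ * μ (paritySet c s₀ ∩ C)) * μ C :=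
        mul_le_mul_left hval (μ C)
    _ = μ (paritySet c s₀ ∩ C) * ((μ C)⁻¹ * μ C) := by ring
    _ = μ (paritySet c s₀ ∩ C) := by
        rw [ENNReal.inv_mul_cancel h0 hfin, mul_one]

end Key
section ZeroOne

variable {M : RMDP S A}

lemma parity_full (c : S → ℕ) (σ : AgentPolicy M) (hσ : σ.PureMemoryless)
    {m : ℝ≥0∞} (hm : 0 < m) (hm1 : m ≤ 1) (h : ∀ s : S, m ≤ parityValFor M c σ s)
    (ρ : EnvPolicy M) (s₀ : S) {μ : Measure (Run S A)} (hμ : IsRunMeasure M σ ρ s₀ μ) :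
    μ (paritySet c s₀) = 1 := by
  letI : TopologicalSpace S := ⊥
  haveI : DiscreteTopology S := ⟨rfl⟩
  letI : TopologicalSpace A := ⊥
  haveI : DiscreteTopology A := ⟨rfl⟩
  haveI := hμ.1
  have hmt : m ≠ ⊤ := fun ht => by rw [ht] at hm1; exact absurd (le_antisymm hm1 le_top).symm (by simp)
  set B : Set (Run S A) := (paritySet c s₀)ᶜ with hBdef
  have hBmeas : MeasurableSet B := (measurableSet_paritySet c s₀).compl
  -- basic cylinder bound
  have hstep : ∀ (w : Run S A) (n : ℕ),
      μ (B ∩ {ω : Run S A | ∀ i < n, ω i = w i}) ≤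
        (1 - m) * μ {ω : Run S A | ∀ i < n, ω i = w i} := by
    intro w n
    set C : Set (Run S A) := {ω : Run S A | ∀ i < n, ω i = w i} with hCdef
    have hCm : MeasurableSet C := measurableSet_cylN w n
    have hxt : μ C ≠ ⊤ := measure_ne_top μ C
    have hpar := key_cylinder_bound c σ hσ h ρ s₀ hμ w n
    have h1 : μ (paritySet c s₀ ∩ C) + μ (B ∩ C) = μ C := by
      rw [Set.inter_comm _ C, Set.inter_comm _ C, hBdef, ← Set.diff_eq]
      exact measure_inter_add_diff C (measurableSet_paritySet c s₀)
    have h2 : μ (B ∩ C) + m * μ C ≤ (1 - m) * μ C + m * μ C := by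
      calc μ (B ∩ C) + m * μ C ≤ μ (B ∩ C) + μ (paritySet c s₀ ∩ C) := add_le_add_right hpar _
        _ = μ C := by rw [add_comm]; exact h1
        _ = ((1 - m) + m) * μ C := by rw [tsub_add_cancel_of_le hm1, one_mul]
        _ = (1 - m) * μ C + m * μ C := by rw [add_mul]
    exact (ENNReal.add_le_add_iff_right (ENNReal.mul_ne_top hmt hxt)).1 h2
  have hstepF : ∀ {n : ℕ} (v : Fin n → A × S),
      μ (B ∩ cylF v) ≤ (1 - m) * μ (cylF v) := by
    intro n v
    have : cylF v = {ω : Run S A | ∀ i < n, ω i = extendW M v i} := by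
      ext ω; exact mem_cylF_iff M v ω
    rw [this]
    exact hstep (extendW M v) n
  have hmeasF : ∀ {n : ℕ} (v : Fin n → A × S), MeasurableSet (cylF v) := by
    intro n v
    have : cylF v = {ω : Run S A | ∀ i < n, ω i = extendW M v i} := by
      ext ω; exact mem_cylF_iff M v ω
    rw [this]
    exact measurableSet_cylN _ n
  -- the main open-set estimate
  have hopen : ∀ U : Set (Run S A), IsOpen U → μ (B ∩ U) ≤ (1 - m) * μ U := by
    intro U hU
    set 𝒲 : Set (Σ n : ℕ, Fin n → A × S) := {p | cylF p.2 ⊆ U ∧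
      ∀ k, (hk : k < p.1) →
        ¬ (cylF (fun i : Fin k => p.2 ⟨(i : ℕ), lt_trans i.isLt hk⟩) ⊆ U)} with h𝒲
    have hcover : U = ⋃ p ∈ 𝒲, cylF p.2 := by
      ext x
      constructor
      · intro hxU
        obtain ⟨nx, hnx⟩ := exists_cyl_subset hU hxU
        have hex : ∃ k : ℕ, cylF (fun i : Fin k => x (i : ℕ)) ⊆ U := by
          refine ⟨nx, fun ω hω => hnx ω ?_⟩
          intro i hi
          exact hω ⟨i, hi⟩
        refine Set.mem_biUnion
          (?_ : (⟨Nat.find hex, fun i => x (i : ℕ)⟩ : Σ n : ℕ, Fin n → A × S) ∈ 𝒲)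
          (fun i => rfl)
        refine ⟨Nat.find_spec hex, ?_⟩
        intro k hk hsub
        exact Nat.find_min hex hk hsub
      · intro hx
        obtain ⟨p, hp, hxp⟩ := Set.mem_iUnion₂.1 hx
        exact hp.1 hxp
    have hkey : ∀ p ∈ 𝒲, ∀ q ∈ 𝒲, ∀ ω : Run S A,
        ω ∈ cylF p.2 → ω ∈ cylF q.2 → p.1 ≤ q.1 → p = q := by
      rintro ⟨np, vp⟩ hp ⟨nq, vq⟩ hq ω hωp hωq hle
      rcases Nat.lt_or_ge np nq with hlt | hge
      · exfalso
        refine hq.2 np hlt ?_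
        have hvv : (fun i : Fin np => vq ⟨(i : ℕ), lt_trans i.isLt hlt⟩) = vp := by
          funext i
          exact (hωq ⟨(i : ℕ), lt_trans i.isLt hlt⟩).symm.trans (hωp i)
        rw [hvv]
        exact hp.1
      · have hnn : np = nq := le_antisymm hle hge
        subst hnn
        have hvv : vp = vq := funext fun i => (hωp i).symm.trans (hωq i)
        rw [hvv]
    have hdisj : 𝒲.PairwiseDisjoint (fun p : Σ n : ℕ, Fin n → A × S => cylF p.2) := by
      intro p hp q hq hne
      refine Set.disjoint_left.2 fun {ω} hωp hωq => hne ?_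
      rcases le_total p.1 q.1 with hle | hle
      · exact hkey p hp q hq ω hωp hωq hle
      · exact (hkey q hq p hp ω hωq hωp hle).symm
    have hcnt : 𝒲.Countable := Set.to_countable 𝒲
    calc μ (B ∩ U) = μ (⋃ p ∈ 𝒲, B ∩ cylF p.2) := by
          rw [hcover, Set.inter_iUnion₂]
      _ ≤ ∑' p : 𝒲, μ (B ∩ cylF (p : Σ n : ℕ, Fin n → A × S).2) :=
          measure_biUnion_le μ hcnt _
      _ ≤ ∑' p : 𝒲, (1 - m) * μ (cylF (p : Σ n : ℕ, Fin n → A × S).2) :=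
          ENNReal.tsum_le_tsum fun p => hstepF _
      _ = (1 - m) * ∑' p : 𝒲, μ (cylF (p : Σ n : ℕ, Fin n → A × S).2) :=
          ENNReal.tsum_mul_left
      _ = (1 - m) * μ (⋃ p ∈ 𝒲, cylF p.2) := by
          rw [measure_biUnion hcnt hdisj fun p _ => hmeasF p.2]
      _ = (1 - m) * μ U := by rw [← hcover]
  -- outer regularity
  have happrox : ∀ ε : NNReal, 0 < ε → μ B ≤ (1 - m) * μ B + ε := by
    intro ε hε
    obtain ⟨U, hBU, hUo, hUlt⟩ := Set.exists_isOpen_lt_of_lt (μ := μ) B (μ B + ε)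
      (ENNReal.lt_add_right (measure_ne_top μ B) (by exact_mod_cast hε.ne'))
    calc μ B = μ (B ∩ U) := by rw [Set.inter_eq_self_of_subset_left hBU]
      _ ≤ (1 - m) * μ U := hopen U hUo
      _ ≤ (1 - m) * (μ B + ε) := mul_le_mul_right hUlt.le _
      _ = (1 - m) * μ B + (1 - m) * ε := by rw [mul_add]
      _ ≤ (1 - m) * μ B + ε := by
          refine add_le_add_right ?_ _
          calc (1 - m) * (ε : ℝ≥0∞) ≤ 1 * ε := mul_le_mul_left tsub_le_self _
            _ = ε := one_mul _
  have hle : μ B ≤ (1 - m) * μ B := by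
    refine ENNReal.le_of_forall_pos_le_add fun ε hε _ => happrox ε hε
  have hB0 : μ B = 0 := by
    by_contra hB0
    have hlt : (1 - m) * μ B < 1 * μ B := by
      refine ENNReal.mul_lt_mul_left hB0 (measure_ne_top μ B) ?_
      exact ENNReal.sub_lt_self ENNReal.one_ne_top one_ne_zero hm.ne'
    rw [one_mul] at hlt
    exact absurd (lt_of_le_of_lt hle hlt) (lt_irrefl _)
  have := measure_add_measure_compl (μ := μ) (measurableSet_paritySet c s₀)
  rw [← hBdef] at this
  rw [hB0, add_zero] at this
  rw [this]
  exact measure_univ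

end ZeroOne
theorem stmt9 (M : RMDP S A) (d : ℕ) (c : S → ℕ) (hc : ∀ s, c s ≤ d)
    (m : ℝ≥0∞) (hm : 0 < m) (σ : AgentPolicy M) (hσ : σ.PureMemoryless)
    (h : ∀ s : S, m ≤ parityValFor M c σ s) :
    ∀ s : S, parityValFor M c σ s = 1 := by
  intro s
  -- a default environment policy
  have hρ0 : ∃ _ρ : EnvPolicy M, True := by
    refine ⟨⟨fun h s a => if ha : a ∈ M.Act s then (M.P_nonempty s a ha).choose
      else fun _ => 0, ?_⟩, trivial⟩
    intro h s a ha
    simp only [dif_pos ha]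
    exact (M.P_nonempty s a ha).choose_spec
  obtain ⟨ρ₀, -⟩ := hρ0
  obtain ⟨μ₀, hμ₀⟩ := exists_runMeasure M σ ρ₀ s
  have hval_le : parityValFor M c σ s ≤ μ₀ (paritySet c s) :=
    le_trans (iInf_le _ ρ₀) (iInf_le _ (⟨μ₀, hμ₀⟩ : {μ : Measure (Run S A) // IsRunMeasure M σ ρ₀ s μ}))
  have hm1 : m ≤ 1 := by
    refine le_trans (h s) (le_trans hval_le ?_)
    haveI := hμ₀.1
    exact prob_le_one
  have hfull : ∀ (ρ : EnvPolicy M) (μ : Measure (Run S A)), IsRunMeasure M σ ρ s μ →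
      μ (paritySet c s) = 1 := fun ρ μ hμ => parity_full c σ hσ hm hm1 h ρ s hμ
  refine le_antisymm (le_trans hval_le (le_of_eq (hfull ρ₀ μ₀ hμ₀))) ?_
  refine le_iInf fun ρ => le_iInf fun μp => ?_
  rw [hfull ρ μp.1 μp.2]
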